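/- A proper hyperideal I of R is α-prime if and only if for all hyperideals I₁, I₂ of R, I₁ ∘ I₂ ⊆ I implies I₁ ⊆ I or α(I₂) ⊆ I. -/
import Mathlib


open Pointwise

namespace HyperPaper

/-- A commutative multiplicative hyperring on an additive commutative group:
the hypermultiplication is associative, commutative, subdistributive over `+`,
and compatible with negation. -/
structure MulHyperring (R : Type*) [AddCommGroup R] where
  hmul : R → R → Set R
  nonempty : ∀ a b, (hmul a b).Nonempty
  comm : ∀ a b, hmul a b = hmul b a
  assoc : ∀ a b c, (⋃ t ∈ hmul a b, hmul t c) = ⋃ t ∈ hmul b c, hmul a t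
  distrib : ∀ a b c, hmul a (b + c) ⊆ hmul a b + hmul a c
  hmul_neg : ∀ a b, hmul a (-b) = -(hmul a b)

variable {R : Type*} [AddCommGroup R]

/-- Product of two subsets under the hyperoperation. -/
def MulHyperring.setMul (H : MulHyperring R) (A B : Set R) : Set R :=
  ⋃ a ∈ A, ⋃ b ∈ B, H.hmul a b

/-- `H.hpow a n` is the `(n+1)`-fold hyperproduct `a ∘ a ∘ ⋯ ∘ a`. -/
def MulHyperring.hpow (H : MulHyperring R) (a : R) : ℕ → Set R
  | 0 => {a}
  | n + 1 => H.setMul {a} (H.hpow a n)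

/-- `H.hprod a l` is the hyperproduct of the list `a :: l`. -/
def MulHyperring.hprod (H : MulHyperring R) (a : R) : List R → Set R
  | [] => {a}
  | b :: l => H.setMul {a} (H.hprod b l)

/-- A hyperideal: an additive subgroup absorbing hypermultiplication. -/
structure Hyperideal (H : MulHyperring R) where
  carrier : Set R
  zero_mem : (0 : R) ∈ carrier
  sub_mem : ∀ a b, a ∈ carrier → b ∈ carrier → a - b ∈ carrier
  absorb : ∀ r x, x ∈ carrier → H.hmul r x ⊆ carrier

/-- A C-hyperideal: any finite hyperproduct meeting it is contained in it. -/
def IsCHyperideal (H : MulHyperring R) (I : Hyperideal H) : Prop :=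
  ∀ a (l : List R), (H.hprod a l ∩ I.carrier).Nonempty → H.hprod a l ⊆ I.carrier

/-- A good homomorphism between multiplicative hyperrings. -/
def IsGoodHom {R₁ R₂ : Type*} [AddCommGroup R₁] [AddCommGroup R₂]
    (H₁ : MulHyperring R₁) (H₂ : MulHyperring R₂) (f : R₁ → R₂) : Prop :=
  (∀ x y, f (x + y) = f x + f y) ∧ ∀ x y, f '' H₁.hmul x y = H₂.hmul (f x) (f y)

/-- A good endomorphism. -/
def IsGoodEndo (H : MulHyperring R) (α : R → R) : Prop :=
  IsGoodHom H H α

/-- A proper hyperideal `I` is `α`-prime if `x ∘ y ⊆ I` implies `x ∈ I` or `α y ∈ I`. -/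
def IsAlphaPrime (H : MulHyperring R) (α : R → R) (I : Hyperideal H) : Prop :=
  I.carrier ≠ Set.univ ∧
    ∀ x y, H.hmul x y ⊆ I.carrier → x ∈ I.carrier ∨ α y ∈ I.carrier

/-- A proper hyperideal `I` is prime if `x ∘ y ⊆ I` implies `x ∈ I` or `y ∈ I`. -/
def IsPrime (H : MulHyperring R) (I : Hyperideal H) : Prop :=
  I.carrier ≠ Set.univ ∧
    ∀ x y, H.hmul x y ⊆ I.carrier → x ∈ I.carrier ∨ y ∈ I.carrier

/-- The radical `√S = {r | rⁿ ⊆ S for some n}`. -/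
def radical (H : MulHyperring R) (S : Set R) : Set R :=
  {r | ∃ n : ℕ, H.hpow r n ⊆ S}

/-- The `α`-radical `ᵅ√S = {r | α(rⁿ) ⊆ S for some n}`. -/
def alphaRad (H : MulHyperring R) (α : R → R) (S : Set R) : Set R :=
  {r | ∃ n : ℕ, α '' H.hpow r n ⊆ S}

/-- The set of `α`-nilpotent elements. -/
def nilAlpha (H : MulHyperring R) (α : R → R) : Set R :=
  {x | ∃ n : ℕ, (0 : R) ∈ α '' H.hpow x n}

/-- The `n`-fold set power of a hyperideal carrier: `idealPow H S n = S^(n+1)`. -/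
def idealPow (H : MulHyperring R) (S : Set R) : ℕ → Set R
  | 0 => S
  | n + 1 => H.setMul S (idealPow H S n)

end HyperPaper

open HyperPaper

section Stmt4Aux

variable {R : Type*} [AddCommGroup R]

/-- Auxiliary: if `y∘a ⊆ I` and `y∘b ⊆ I` then `y∘(a-b) ⊆ I`. -/
lemma hmul_sub_subset (H : MulHyperring R)
    (I : Hyperideal H) (y a b : R) (ha : H.hmul y a ⊆ I.carrier)
    (hb : H.hmul y b ⊆ I.carrier) : H.hmul y (a - b) ⊆ I.carrier := by
  intro z hz
  have hsub : H.hmul y (a - b) ⊆ H.hmul y a + H.hmul y (-b) := by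
    have := H.distrib y a (-b)
    simpa [sub_eq_add_neg] using this
  have hz' := hsub hz
  rw [H.hmul_neg] at hz'
  obtain ⟨u, hu, v, hv, rfl⟩ := Set.mem_add.mp hz'
  have hvb : -v ∈ H.hmul y b := by simpa using hv
  have := I.sub_mem u (-v) (ha hu) (hb hvb)
  simpa [sub_neg_eq_add] using this

/-- Auxiliary: membership in setMul. -/
lemma mem_setMul (H : MulHyperring R)
    {A B : Set R} {a b t : R} (ha : a ∈ A) (hb : b ∈ B) (ht : t ∈ H.hmul a b) :
    t ∈ H.setMul A B :=
  Set.mem_iUnion₂.mpr ⟨a, ha, Set.mem_iUnion₂.mpr ⟨b, hb, ht⟩⟩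

/-- The hyperideal `{a | a∘y ⊆ I}`. -/
def quotIdeal (H : MulHyperring R) (I : Hyperideal H) (y : R) : Hyperideal H where
  carrier := {a | H.hmul a y ⊆ I.carrier}
  zero_mem := by
    intro t ht
    rw [H.comm] at ht
    exact I.absorb y 0 I.zero_mem ht
  sub_mem := by
    intro a b ha hb
    show H.hmul (a - b) y ⊆ I.carrier
    rw [H.comm]
    exact hmul_sub_subset H I y a b (by rw [H.comm]; exact ha) (by rw [H.comm]; exact hb)
  absorb := by
    intro r a ha t ht s hs
    have key : s ∈ ⋃ t' ∈ H.hmul r a, H.hmul t' y :=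
      Set.mem_iUnion₂.mpr ⟨t, ht, hs⟩
    rw [H.assoc] at key
    obtain ⟨u, hu, hsu⟩ := Set.mem_iUnion₂.mp key
    exact I.absorb r u (ha hu) hsu

/-- The hyperideal `{b | ∀ a ∈ A, a∘b ⊆ I}` for a set `A` closed under hyperideal-like
absorption (`A` = carrier of `quotIdeal`). -/
def quotIdeal₂ (H : MulHyperring R) (I : Hyperideal H) (y : R) : Hyperideal H where
  carrier := {b | ∀ a ∈ (quotIdeal H I y).carrier, H.hmul a b ⊆ I.carrier}
  zero_mem := by
    intro a _ t ht
    exact I.absorb a 0 I.zero_mem ht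
  sub_mem := fun b c hb hc a ha => hmul_sub_subset H I a b c (hb a ha) (hc a ha)
  absorb := by
    intro r b hb t ht a ha s hs
    have key : s ∈ ⋃ t' ∈ H.hmul a r, H.hmul t' b := by
      rw [H.assoc]
      exact Set.mem_iUnion₂.mpr ⟨t, ht, hs⟩
    obtain ⟨u, hu, hsu⟩ := Set.mem_iUnion₂.mp key
    have huA : u ∈ (quotIdeal H I y).carrier := by
      have := (quotIdeal H I y).absorb r a ha
      rw [H.comm] at hu
      exact this hu
    exact hb u huA hsu

end Stmt4Aux


/-- A proper hyperideal `I` is `α`-prime iff for all hyperideals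
`I₁, I₂`, `I₁ ∘ I₂ ⊆ I` implies `I₁ ⊆ I` or `α(I₂) ⊆ I`. -/
theorem stmt4 {R : Type*} [AddCommGroup R] (H : MulHyperring R) (α : R → R)
    (hα : IsGoodEndo H α) (e : R) (he : ∀ a : R, a ∈ H.hmul a e)
    (I : Hyperideal H) (hproper : I.carrier ≠ Set.univ) :
    IsAlphaPrime H α I ↔
      ∀ I₁ I₂ : Hyperideal H, H.setMul I₁.carrier I₂.carrier ⊆ I.carrier →
        I₁.carrier ⊆ I.carrier ∨ α '' I₂.carrier ⊆ I.carrier := by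
  constructor
  · rintro ⟨-, hp⟩ I₁ I₂ hsub
    by_contra hcon
    push_neg at hcon
    obtain ⟨h1, h2⟩ := hcon
    obtain ⟨x, hx1, hxI⟩ := Set.not_subset.mp h1
    obtain ⟨z, hz, hzI⟩ := Set.not_subset.mp h2
    obtain ⟨y, hy2, rfl⟩ := hz
    have hxyI : H.hmul x y ⊆ I.carrier := fun t ht => hsub (mem_setMul H hx1 hy2 ht)
    rcases hp x y hxyI with h | h
    · exact hxI h
    · exact hzI h
  · intro hI
    refine ⟨hproper, fun x y hxy => ?_⟩
    have hprod : H.setMul (quotIdeal H I y).carrier (quotIdeal₂ H I y).carrier ⊆ I.carrier := by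
      intro t ht
      obtain ⟨a, ha, hrest⟩ := Set.mem_iUnion₂.mp ht
      obtain ⟨b, hb, htab⟩ := Set.mem_iUnion₂.mp hrest
      exact hb a ha htab
    have hxmem : x ∈ (quotIdeal H I y).carrier := hxy
    have hymem : y ∈ (quotIdeal₂ H I y).carrier := fun a ha => ha
    rcases hI _ _ hprod with h | h
    · exact Or.inl (h hxmem)
    · exact Or.inr (h ⟨y, hymem, rfl⟩)
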